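/- Let U be a k-dimensional F_q-subspace of F_{q^n} with 2 ≤ k ≤ n/2, and let f = |{uv^{-1}F_q^* : u,v ∈ U∖0}| denote the number of fractions of U. Then f ≤ Q + 1 where Q = ((q^k−1)/(q−1))·((q^k−q)/(q−1)), and equality holds if and only if Stab(U) = F_q^* and dim(U ∩ αU) ≤ 1 for all α ∈ F_{q^n}^* with αU ≠ U (i.e., Orb(U) is an optimal full-length orbit code with distance 2k−2). -/

import Mathlib

open Submodule

namespace Stmt7Aux

variable {F K : Type} [Field F] [Field K] [Algebra F K]

lemma span_smul_eq {c : F} (hc : c ≠ 0) (x : K) :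
    Submodule.span F {c • x} = Submodule.span F {x} :=
  Submodule.span_singleton_smul_eq (IsUnit.mk0 c hc) x

lemma exists_smul_of_span_eq {x y : K} (hx : x ≠ 0)
    (h : Submodule.span F {x} = Submodule.span F {y}) :
    ∃ c : F, c ≠ 0 ∧ x = c • y := by
  have hmem : x ∈ Submodule.span F {y} := h ▸ Submodule.mem_span_singleton_self x
  obtain ⟨c, hc⟩ := Submodule.mem_span_singleton.1 hmem
  refine ⟨c, ?_, hc.symm⟩
  rintro rfl
  rw [zero_smul] at hc
  exact hx hc.symm

lemma span_eq_of_smul {x y : K} {c : F} (hc : c ≠ 0) (h : x = c • y) :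
    Submodule.span F {x} = Submodule.span F {y} := h ▸ span_smul_eq hc y

/-- well-definedness of the fraction span -/
lemma frac_wd {u v u' v' : K} (hu : u ≠ 0) (hv' : v' ≠ 0)
    (h1 : Submodule.span F {u} = Submodule.span F {u'})
    (h2 : Submodule.span F {v} = Submodule.span F {v'}) :
    Submodule.span F {u * v⁻¹} = Submodule.span F {u' * v'⁻¹} := by
  obtain ⟨c, hc, rfl⟩ := exists_smul_of_span_eq hu h1
  have hv : v ≠ 0 := by
    rintro rfl
    rw [Submodule.span_zero_singleton] at h2
    exact hv' (Submodule.span_singleton_eq_bot.1 h2.symm)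
  obtain ⟨d, hd, rfl⟩ := exists_smul_of_span_eq hv h2
  have : (c • u') * (d • v')⁻¹ = (c * d⁻¹) • (u' * v'⁻¹) := by
    rw [Algebra.smul_def, Algebra.smul_def, Algebra.smul_def, mul_inv, map_mul, map_inv₀]
    ring
  rw [this]
  exact span_smul_eq (by simp [hc, hd]) _

lemma map_algebraMap_eq (U : Submodule F K) {c : F} (hc : c ≠ 0) :
    Submodule.map (LinearMap.mulLeft F (algebraMap F K c)) U = U := by
  ext x
  simp only [Submodule.mem_map, LinearMap.mulLeft_apply]
  constructor
  · rintro ⟨y, hy, rfl⟩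
    rw [← Algebra.smul_def]
    exact U.smul_mem c hy
  · intro hx
    exact ⟨c⁻¹ • x, U.smul_mem _ hx, by rw [← Algebra.smul_def, smul_smul,
      mul_inv_cancel₀ hc, one_smul]⟩

lemma two_le_finrank_of_spans_ne [FiniteDimensional F K] {W : Submodule F K} {x y : K}
    (hxW : x ∈ W) (hyW : y ∈ W) (hx : x ≠ 0) (hy : y ≠ 0)
    (hxy : Submodule.span F {x} ≠ Submodule.span F {y}) :
    2 ≤ Module.finrank F W := by
  have hle : Submodule.span F {x} ⊔ Submodule.span F {y} ≤ W := by
    refine sup_le ?_ ?_ <;> rw [Submodule.span_le, Set.singleton_subset_iff] <;> assumption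
  have hinf : Submodule.span F {x} ⊓ Submodule.span F {y} = ⊥ := by
    rw [eq_bot_iff]
    rintro z ⟨hz1, hz2⟩
    simp only [Submodule.mem_bot]
    by_contra hz
    obtain ⟨a, ha⟩ := Submodule.mem_span_singleton.1 hz1
    obtain ⟨b, hb⟩ := Submodule.mem_span_singleton.1 hz2
    have ha0 : a ≠ 0 := by rintro rfl; rw [zero_smul] at ha; exact hz ha.symm
    have hb0 : b ≠ 0 := by rintro rfl; rw [zero_smul] at hb; exact hz hb.symm
    apply hxy
    have hxz : Submodule.span F {z} = Submodule.span F {x} := span_eq_of_smul ha0 ha.symm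
    have hyz : Submodule.span F {z} = Submodule.span F {y} := span_eq_of_smul hb0 hb.symm
    rw [← hxz, hyz]
  have h2 : Module.finrank F ↥(Submodule.span F {x} ⊔ Submodule.span F {y}) = 2 := by
    have := Submodule.finrank_sup_add_finrank_inf_eq (Submodule.span F {x}) (Submodule.span F {y})
    rw [hinf, finrank_bot, finrank_span_singleton hx, finrank_span_singleton hy] at this
    omega
  calc 2 = _ := h2.symm
    _ ≤ Module.finrank F W := Submodule.finrank_mono hle

lemma exists_spans_ne_of_two_le_finrank [FiniteDimensional F K] {W : Submodule F K}
    (h : 2 ≤ Module.finrank F W) :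
    ∃ x y : K, x ∈ W ∧ y ∈ W ∧ x ≠ 0 ∧ y ≠ 0 ∧
      Submodule.span F {x} ≠ Submodule.span F {y} := by
  have hW : W ≠ ⊥ := by
    rintro rfl
    rw [finrank_bot] at h; omega
  obtain ⟨x, hxW, hx⟩ := Submodule.exists_mem_ne_zero_of_ne_bot hW
  by_contra hcon
  push_neg at hcon
  have hle : W ≤ Submodule.span F {x} := by
    intro y hyW
    by_cases hy : y = 0
    · simp [hy]
    · have := hcon y x hyW hxW hy hx
      rw [← this]; exact Submodule.mem_span_singleton_self y
  have := Submodule.finrank_mono (s := W) (t := Submodule.span F {x}) hle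
  rw [finrank_span_singleton hx] at this
  omega

set_option linter.unusedSectionVars false

/-- projective points of U -/
def Pts (U : Submodule F K) : Type :=
  {W : Submodule F K // ∃ u : K, u ∈ U ∧ u ≠ 0 ∧ W = Submodule.span F {u}}

noncomputable def gen {U : Submodule F K} (L : Pts U) : K := L.2.choose

lemma gen_mem {U : Submodule F K} (L : Pts U) : gen L ∈ U := L.2.choose_spec.1
lemma gen_ne {U : Submodule F K} (L : Pts U) : gen L ≠ 0 := L.2.choose_spec.2.1
lemma gen_span {U : Submodule F K} (L : Pts U) : L.1 = Submodule.span F {gen L} :=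
  L.2.choose_spec.2.2

variable [Fintype F] [Fintype K]

lemma finite_submodule : Finite (Submodule F K) :=
  Finite.of_injective (fun W => (W : Set K)) SetLike.coe_injective

lemma finite_pts (U : Submodule F K) : Finite (Pts U) := by
  have := finite_submodule (F := F) (K := K)
  exact Finite.of_injective (Subtype.val) Subtype.val_injective

lemma card_pts_mul (U : Submodule F K) :
    Nat.card (Pts U) * (Fintype.card F - 1) =
      Fintype.card F ^ (Module.finrank F U) - 1 := by
  have := finite_pts U
  classical
  -- bijection (Pts U) × {c : F // c ≠ 0} ≃ {x : K // x ∈ U ∧ x ≠ 0}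
  have hbij : Function.Bijective
      (fun p : (Pts U) × {c : F // c ≠ 0} =>
        (⟨p.2.1 • gen p.1, U.smul_mem _ (gen_mem p.1),
          smul_ne_zero p.2.2 (gen_ne p.1)⟩ : {x : K // x ∈ U ∧ x ≠ 0})) := by
    constructor
    · rintro ⟨L, c, hc⟩ ⟨L', c', hc'⟩ h
      simp only [Subtype.mk.injEq] at h
      have hspan : L.1 = L'.1 := by
        rw [gen_span L, gen_span L', ← span_smul_eq hc (gen L), ← span_smul_eq hc' (gen L'), h]
      have hLL : L = L' := Subtype.ext hspan
      subst hLL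
      have : c = c' := by
        have := h
        rw [← sub_eq_zero, ← sub_smul, smul_eq_zero, sub_eq_zero] at this
        rcases this with h1 | h1
        · exact h1
        · exact absurd h1 (gen_ne L)
      simp [this]
    · rintro ⟨x, hxU, hx⟩
      set L : Pts U := ⟨Submodule.span F {x}, x, hxU, hx, rfl⟩ with hL
      have hsp : Submodule.span F {x} = Submodule.span F {gen L} := gen_span L
      obtain ⟨c, hc, hcx⟩ := exists_smul_of_span_eq hx hsp
      exact ⟨⟨L, ⟨c, hc⟩⟩, by simp [← hcx]⟩
  have hcard := Nat.card_eq_of_bijective _ hbij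
  rw [Nat.card_prod] at hcard
  -- card {c : F // c ≠ 0} = card F - 1
  have h1 : Nat.card {c : F // c ≠ 0} = Fintype.card F - 1 := by
    rw [← Nat.card_congr (unitsEquivNeZero (G₀ := F)), Nat.card_eq_fintype_card,
      Fintype.card_units]
  -- card {x : K // x ∈ U ∧ x ≠ 0} = card F ^ finrank - 1
  have h2 : Nat.card {x : K // x ∈ U ∧ x ≠ 0} =
      Fintype.card F ^ (Module.finrank F U) - 1 := by
    have e : {x : K // x ∈ U ∧ x ≠ 0} ≃ {x : ↥U // x ≠ 0} :=
      { toFun := fun x => ⟨⟨x.1, x.2.1⟩, by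
          simpa [Submodule.mk_eq_zero] using x.2.2⟩
        invFun := fun x => ⟨x.1.1, x.1.2, by
          simpa [Submodule.mk_eq_zero] using x.2⟩
        left_inv := fun x => rfl
        right_inv := fun x => rfl }
    rw [Nat.card_congr e]
    haveI : Fintype ↥U := Fintype.ofFinite _
    haveI : DecidableEq ↥U := Classical.decEq _
    rw [Nat.card_eq_fintype_card]
    have hcompl : Fintype.card {x : ↥U // ¬ (x = 0)} =
        Fintype.card ↥U - Fintype.card {x : ↥U // x = 0} :=
      Fintype.card_subtype_compl _
    haveI : Unique {x : ↥U // x = 0} :=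
      { default := ⟨0, rfl⟩, uniq := fun a => Subtype.ext a.2 }
    have h1 : Fintype.card {x : ↥U // x = 0} = 1 := Fintype.card_unique
    have hU : Fintype.card ↥U = Fintype.card F ^ (Module.finrank F U) :=
      Module.card_eq_pow_finrank
    have hgoal : Fintype.card {x : ↥U // x ≠ 0} = Fintype.card {x : ↥U // ¬ (x = 0)} := rfl
    rw [hgoal, hcompl, h1, hU]
  rw [h1, h2] at hcard
  exact hcard


section Part2
variable {F K : Type} [Field F] [Field K] [Algebra F K] [Fintype F] [Fintype K]

def DPairs (U : Submodule F K) : Type := {p : Pts U × Pts U // p.1 ≠ p.2}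

lemma finite_dpairs (U : Submodule F K) : Finite (DPairs U) := by
  have := finite_pts U
  exact Finite.of_injective (Subtype.val : DPairs U → _) Subtype.val_injective

lemma card_dpairs (U : Submodule F K) :
    Nat.card (DPairs U) = Nat.card (Pts U) * (Nat.card (Pts U) - 1) := by
  have := finite_pts U
  classical
  have hD : Nat.card (DPairs U) = Nat.card {p : Pts U × Pts U // ¬ p.1 = p.2} := rfl
  have hsplit : Nat.card (Pts U × Pts U) = Nat.card {p : Pts U × Pts U // p.1 = p.2}
      + Nat.card {p : Pts U × Pts U // ¬ p.1 = p.2} := by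
    rw [← Nat.card_sum, Nat.card_congr (Equiv.sumCompl _)]
  have hdiag : Nat.card {p : Pts U × Pts U // p.1 = p.2} = Nat.card (Pts U) :=
    Nat.card_congr ⟨fun p => p.1.1, fun L => ⟨(L, L), rfl⟩,
      fun p => Subtype.ext (Prod.ext rfl p.2), fun L => rfl⟩
  have hprod : Nat.card (Pts U × Pts U) = Nat.card (Pts U) * Nat.card (Pts U) :=
    Nat.card_prod _ _
  have hmul : Nat.card (Pts U) * (Nat.card (Pts U) - 1)
      = Nat.card (Pts U) * Nat.card (Pts U) - Nat.card (Pts U) := by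
    cases Nat.card (Pts U) with
    | zero => rfl
    | succ m => simp [Nat.succ_sub_one, Nat.mul_succ, Nat.succ_mul]
  omega

/-- the map from pairs-plus-point onto fractions -/
noncomputable def hmap (U : Submodule F K) (u0 : K) (h0 : u0 ∈ U) (hu0 : u0 ≠ 0) :
    DPairs U ⊕ Unit →
      {W : Submodule F K // ∃ u v : K, u ∈ U ∧ v ∈ U ∧ u ≠ 0 ∧ v ≠ 0 ∧
        W = Submodule.span F {u * v⁻¹}} :=
  Sum.elim
    (fun p => ⟨Submodule.span F {gen p.1.1 * (gen p.1.2)⁻¹},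
      gen p.1.1, gen p.1.2, gen_mem _, gen_mem _, gen_ne _, gen_ne _, rfl⟩)
    (fun _ => ⟨Submodule.span F {u0 * u0⁻¹}, u0, u0, h0, h0, hu0, hu0, rfl⟩)

lemma hmap_surj (U : Submodule F K) (u0 : K) (h0 : u0 ∈ U) (hu0 : u0 ≠ 0) :
    Function.Surjective (hmap U u0 h0 hu0) := by
  rintro ⟨W, u, v, hu, hv, hune, hvne, rfl⟩
  by_cases hsp : Submodule.span F {u} = Submodule.span F {v}
  · refine ⟨Sum.inr Unit.unit, Subtype.ext ?_⟩
    show Submodule.span F {u0 * u0⁻¹} = Submodule.span F {u * v⁻¹}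
    obtain ⟨c, hc, hcu⟩ := exists_smul_of_span_eq hune hsp
    have h1 : u * v⁻¹ = c • (1 : K) := by
      rw [hcu, smul_mul_assoc, mul_inv_cancel₀ hvne]
    rw [h1, mul_inv_cancel₀ hu0, span_smul_eq hc]
  · set L1 : Pts U := ⟨Submodule.span F {u}, u, hu, hune, rfl⟩
    set L2 : Pts U := ⟨Submodule.span F {v}, v, hv, hvne, rfl⟩
    have hne : L1 ≠ L2 := fun h => hsp (congrArg Subtype.val h)
    refine ⟨Sum.inl ⟨(L1, L2), hne⟩, Subtype.ext ?_⟩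
    show Submodule.span F {gen L1 * (gen L2)⁻¹} = Submodule.span F {u * v⁻¹}
    exact frac_wd (gen_ne L1) hvne (gen_span L1).symm (gen_span L2).symm

lemma hmap_inl_ne_inr (U : Submodule F K) (u0 : K) (h0 : u0 ∈ U) (hu0 : u0 ≠ 0)
    (p : DPairs U) (t : Unit) :
    hmap U u0 h0 hu0 (Sum.inl p) ≠ hmap U u0 h0 hu0 (Sum.inr t) := by
  intro h
  have hval : Submodule.span F {gen p.1.1 * (gen p.1.2)⁻¹} =
      Submodule.span F {u0 * u0⁻¹} := congrArg Subtype.val h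
  rw [mul_inv_cancel₀ hu0] at hval
  have hmem : gen p.1.1 * (gen p.1.2)⁻¹ ∈ Submodule.span F {(1 : K)} := by
    rw [← hval]; exact Submodule.mem_span_singleton_self _
  obtain ⟨c, hc⟩ := Submodule.mem_span_singleton.1 hmem
  rw [Algebra.smul_def, mul_one] at hc
  have hc0 : c ≠ 0 := by
    rintro rfl
    rw [map_zero] at hc
    exact mul_ne_zero (gen_ne p.1.1) (inv_ne_zero (gen_ne p.1.2)) hc.symm
  have hg : gen p.1.1 = c • gen p.1.2 := by
    rw [Algebra.smul_def, hc, mul_assoc, inv_mul_cancel₀ (gen_ne p.1.2), mul_one]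
  exact p.2 (Subtype.ext (by rw [gen_span p.1.1, gen_span p.1.2, span_eq_of_smul hc0 hg]))

/-- the key collision analysis -/
lemma key [FiniteDimensional F K] {U : Submodule F K}
    (hstab : {α : K | α ≠ 0 ∧ Submodule.map (LinearMap.mulLeft F α) U = U}
      = {α : K | ∃ c : F, c ≠ 0 ∧ α = algebraMap F K c})
    (hdim : ∀ α : K, α ≠ 0 → Submodule.map (LinearMap.mulLeft F α) U ≠ U →
      Module.finrank F ↥(U ⊓ Submodule.map (LinearMap.mulLeft F α) U) ≤ 1)
    {u v u' v' : K} (hu : u ∈ U) (hv : v ∈ U) (hu' : u' ∈ U) (hv' : v' ∈ U)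
    (hune : u ≠ 0) (hvne : v ≠ 0) (hu'ne : u' ≠ 0) (hv'ne : v' ≠ 0)
    (huv : Submodule.span F {u} ≠ Submodule.span F {v})
    (h : Submodule.span F {u * v⁻¹} = Submodule.span F {u' * v'⁻¹}) :
    Submodule.span F {u} = Submodule.span F {u'} ∧
      Submodule.span F {v} = Submodule.span F {v'} := by
  have hfrac : u * v⁻¹ ≠ 0 := mul_ne_zero hune (inv_ne_zero hvne)
  obtain ⟨c, hc, hcf⟩ := exists_smul_of_span_eq hfrac h
  set α : K := v * v'⁻¹ with hα
  have hαne : α ≠ 0 := mul_ne_zero hvne (inv_ne_zero hv'ne)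
  have hvα : v = α * v' := by
    rw [hα, mul_assoc, inv_mul_cancel₀ hv'ne, mul_one]
  have huα : u = c • (α * u') := by
    have h5 : u = c • (u' * v'⁻¹) * v := by
      rw [← hcf, mul_assoc, inv_mul_cancel₀ hvne, mul_one]
    rw [h5, smul_mul_assoc]
    congr 1
    rw [hα]
    ring
  have humem : u ∈ Submodule.map (LinearMap.mulLeft F α) U := by
    have h1 : α * u' ∈ Submodule.map (LinearMap.mulLeft F α) U :=
      ⟨u', hu', rfl⟩
    rw [huα]
    exact Submodule.smul_mem _ c h1
  have hvmem : v ∈ Submodule.map (LinearMap.mulLeft F α) U := ⟨v', hv', hvα.symm⟩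
  have hmapeq : Submodule.map (LinearMap.mulLeft F α) U = U := by
    by_contra hne
    have h2 := hdim α hαne hne
    have h3 := two_le_finrank_of_spans_ne (W := U ⊓ Submodule.map (LinearMap.mulLeft F α) U)
      ⟨hu, humem⟩ ⟨hv, hvmem⟩ hune hvne huv
    omega
  have hαin : α ∈ {α : K | ∃ c : F, c ≠ 0 ∧ α = algebraMap F K c} := by
    rw [← hstab]; exact ⟨hαne, hmapeq⟩
  obtain ⟨d, hd, hαd⟩ := hαin
  constructor
  · have : u = (c * d) • u' := by
      rw [huα, hαd, ← Algebra.smul_def, smul_smul]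
    exact span_eq_of_smul (mul_ne_zero hc hd) this
  · have : v = d • v' := by rw [hvα, hαd, ← Algebra.smul_def]
    exact span_eq_of_smul hd this

lemma hmap_inj [FiniteDimensional F K] {U : Submodule F K}
    (u0 : K) (h0 : u0 ∈ U) (hu0 : u0 ≠ 0)
    (hstab : {α : K | α ≠ 0 ∧ Submodule.map (LinearMap.mulLeft F α) U = U}
      = {α : K | ∃ c : F, c ≠ 0 ∧ α = algebraMap F K c})
    (hdim : ∀ α : K, α ≠ 0 → Submodule.map (LinearMap.mulLeft F α) U ≠ U →
      Module.finrank F ↥(U ⊓ Submodule.map (LinearMap.mulLeft F α) U) ≤ 1) :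
    Function.Injective (hmap U u0 h0 hu0) := by
  rintro (p | t) (p' | t') h
  · have hval : Submodule.span F {gen p.1.1 * (gen p.1.2)⁻¹} =
        Submodule.span F {gen p'.1.1 * (gen p'.1.2)⁻¹} := congrArg Subtype.val h
    have huv : Submodule.span F {gen p.1.1} ≠ Submodule.span F {gen p.1.2} := by
      intro hh
      exact p.2 (Subtype.ext (by rw [gen_span p.1.1, gen_span p.1.2, hh]))
    obtain ⟨h1, h2⟩ := key hstab hdim (gen_mem p.1.1) (gen_mem p.1.2)
      (gen_mem p'.1.1) (gen_mem p'.1.2) (gen_ne _) (gen_ne _) (gen_ne _) (gen_ne _) huv hval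
    have e1 : p.1.1 = p'.1.1 := Subtype.ext (by rw [gen_span p.1.1, gen_span p'.1.1, h1])
    have e2 : p.1.2 = p'.1.2 := Subtype.ext (by rw [gen_span p.1.2, gen_span p'.1.2, h2])
    congr 1
    exact Subtype.ext (Prod.ext e1 e2)
  · exact absurd h (hmap_inl_ne_inr U u0 h0 hu0 p t')
  · exact absurd h.symm (hmap_inl_ne_inr U u0 h0 hu0 p' t)
  · cases t; cases t'; rfl

end Part2

end Stmt7Aux

open Stmt7Aux in
/-- The number of fractions satisfies `f ≤ Q + 1` where
`Q = ((q^k-1)/(q-1))·((q^k-q)/(q-1))`, with equality iff `Orb(U)` is an optimal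
full-length orbit code, i.e. `Stab(U) = F_q^*` and `dim(U ∩ αU) ≤ 1` whenever `αU ≠ U`. -/
theorem stmt_7 (F K : Type) [Field F] [Field K] [Algebra F K]
    [Fintype F] [Fintype K] (q n k : ℕ)
    (hq : Fintype.card F = q) (hn : Module.finrank F K = n)
    (hk2 : 2 ≤ k) (hkn : 2 * k ≤ n)
    (U : Submodule F K) (hk : Module.finrank F U = k) :
    Nat.card {W : Submodule F K //
        ∃ u v : K, u ∈ U ∧ v ∈ U ∧ u ≠ 0 ∧ v ≠ 0 ∧
          W = Submodule.span F {u * v⁻¹}}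
      ≤ (q ^ k - 1) / (q - 1) * ((q ^ k - q) / (q - 1)) + 1 ∧
    (Nat.card {W : Submodule F K //
        ∃ u v : K, u ∈ U ∧ v ∈ U ∧ u ≠ 0 ∧ v ≠ 0 ∧
          W = Submodule.span F {u * v⁻¹}}
        = (q ^ k - 1) / (q - 1) * ((q ^ k - q) / (q - 1)) + 1 ↔
      ({α : K | α ≠ 0 ∧ Submodule.map (LinearMap.mulLeft F α) U = U}
          = {α : K | ∃ c : F, c ≠ 0 ∧ α = algebraMap F K c} ∧
        ∀ α : K, α ≠ 0 → Submodule.map (LinearMap.mulLeft F α) U ≠ U →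
          Module.finrank F ↥(U ⊓ Submodule.map (LinearMap.mulLeft F α) U) ≤ 1)) := by
  haveI : Module.Finite F K := Module.finite_iff_finite.mpr inferInstance
  haveI := finite_submodule (F := F) (K := K)
  haveI := finite_pts U
  haveI := finite_dpairs U
  haveI : Finite {W : Submodule F K //
      ∃ u v : K, u ∈ U ∧ v ∈ U ∧ u ≠ 0 ∧ v ≠ 0 ∧ W = Submodule.span F {u * v⁻¹}} :=
    Finite.of_injective Subtype.val Subtype.val_injective
  -- a nonzero element of U
  have hUne : U ≠ ⊥ := by
    intro h
    rw [h, finrank_bot] at hk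
    omega
  obtain ⟨u0, h0, hu0⟩ := Submodule.exists_mem_ne_zero_of_ne_bot hUne
  -- arithmetic
  set P := Nat.card (Pts U) with hPdef
  have hP : P * (q - 1) = q ^ k - 1 := by
    rw [hPdef, ← hq, ← hk]
    exact card_pts_mul U
  have hq2 : 2 ≤ q := by rw [← hq]; exact Fintype.one_lt_card
  have hqk : q ≤ q ^ k := Nat.le_self_pow (by omega) q
  have hPpos : 1 ≤ P := by
    rcases Nat.eq_zero_or_pos P with h | h
    · rw [h, zero_mul] at hP; omega
    · exact h
  have hQ1 : (q ^ k - 1) / (q - 1) = P := by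
    rw [← hP]
    exact Nat.mul_div_cancel _ (by omega)
  have hQ2 : (q ^ k - q) / (q - 1) = P - 1 := by
    have h1 : (P - 1) * (q - 1) = q ^ k - q := by
      rw [tsub_mul, hP, one_mul]
      omega
    rw [← h1]
    exact Nat.mul_div_cancel _ (by omega)
  have hQ : (q ^ k - 1) / (q - 1) * ((q ^ k - q) / (q - 1)) = Nat.card (DPairs U) := by
    rw [hQ1, hQ2, card_dpairs U]
  have hdom : Nat.card (DPairs U ⊕ Unit) = Nat.card (DPairs U) + 1 := by
    rw [Nat.card_sum, Nat.card_unique (α := Unit)]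
  have hsurj := hmap_surj U u0 h0 hu0
  constructor
  · calc Nat.card {W : Submodule F K //
        ∃ u v : K, u ∈ U ∧ v ∈ U ∧ u ≠ 0 ∧ v ≠ 0 ∧ W = Submodule.span F {u * v⁻¹}}
        ≤ Nat.card (DPairs U ⊕ Unit) := Nat.card_le_card_of_surjective _ hsurj
      _ = (q ^ k - 1) / (q - 1) * ((q ^ k - q) / (q - 1)) + 1 := by rw [hdom, hQ]
  constructor
  · -- equality implies optimality
    intro heq
    have hbij : Function.Bijective (hmap U u0 h0 hu0) := by
      rw [Nat.bijective_iff_surjective_and_card]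
      exact ⟨hsurj, by rw [hdom, hQ.symm, ← heq]⟩
    have hinj := hbij.injective
    have hfin2 : 2 ≤ Module.finrank F U := by omega
    constructor
    · -- stabilizer is exactly F_q^*
      apply Set.Subset.antisymm
      · rintro α ⟨hα, hmapU⟩
        obtain ⟨x, y, hxU, hyU, hx, hy, hxy⟩ := exists_spans_ne_of_two_le_finrank hfin2
        have hαx : α * x ∈ U := by
          rw [← hmapU]; exact ⟨x, hxU, rfl⟩
        have hαy : α * y ∈ U := by
          rw [← hmapU]; exact ⟨y, hyU, rfl⟩
        set L1 : Pts U := ⟨Submodule.span F {α * x}, α * x, hαx, mul_ne_zero hα hx, rfl⟩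
        set L2 : Pts U := ⟨Submodule.span F {α * y}, α * y, hαy, mul_ne_zero hα hy, rfl⟩
        set Lx : Pts U := ⟨Submodule.span F {x}, x, hxU, hx, rfl⟩
        set Ly : Pts U := ⟨Submodule.span F {y}, y, hyU, hy, rfl⟩
        have hne1 : L1 ≠ L2 := by
          intro h
          have hsp : Submodule.span F {α * x} = Submodule.span F {α * y} :=
            congrArg Subtype.val h
          obtain ⟨c, hc, hcx⟩ := exists_smul_of_span_eq (mul_ne_zero hα hx) hsp
          rw [← mul_smul_comm] at hcx
          exact hxy (span_eq_of_smul hc (mul_left_cancel₀ hα hcx))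
        have hne2 : Lx ≠ Ly := fun h => hxy (congrArg Subtype.val h)
        have hmid : (α * x) * (α * y)⁻¹ = x * y⁻¹ := by
          field_simp
        have hval : hmap U u0 h0 hu0 (Sum.inl ⟨(L1, L2), hne1⟩)
            = hmap U u0 h0 hu0 (Sum.inl ⟨(Lx, Ly), hne2⟩) := by
          apply Subtype.ext
          show Submodule.span F {gen L1 * (gen L2)⁻¹} = Submodule.span F {gen Lx * (gen Ly)⁻¹}
          calc Submodule.span F {gen L1 * (gen L2)⁻¹}
              = Submodule.span F {(α * x) * (α * y)⁻¹} :=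
                frac_wd (gen_ne L1) (mul_ne_zero hα hy) (gen_span L1).symm (gen_span L2).symm
            _ = Submodule.span F {x * y⁻¹} := by rw [hmid]
            _ = Submodule.span F {gen Lx * (gen Ly)⁻¹} :=
                frac_wd hx (gen_ne Ly) (gen_span Lx) (gen_span Ly)
        have hpairs := hinj hval
        replace hpairs := Sum.inl_injective hpairs
        have hsp : Submodule.span F {α * x} = Submodule.span F {x} :=
          congrArg (fun p : DPairs U => p.1.1.1) hpairs
        obtain ⟨c, hc, hcx⟩ := exists_smul_of_span_eq (mul_ne_zero hα hx) hsp
        refine ⟨c, hc, ?_⟩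
        rw [Algebra.smul_def] at hcx
        exact mul_right_cancel₀ hx hcx
      · rintro α ⟨c, hc, rfl⟩
        refine ⟨by simpa using hc, map_algebraMap_eq U hc⟩
    · -- intersection dimension condition
      intro α hα hne
      by_contra hgt
      push_neg at hgt
      obtain ⟨x, y, hxW, hyW, hx, hy, hxy⟩ := exists_spans_ne_of_two_le_finrank hgt
      obtain ⟨hxU, u, huU, hux⟩ := hxW
      obtain ⟨hyU, v, hvU, hvy⟩ := hyW
      have hux' : α * u = x := hux
      have hvy' : α * v = y := hvy
      have hu : u ≠ 0 := by rintro rfl; rw [mul_zero] at hux'; exact hx hux'.symm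
      have hv : v ≠ 0 := by rintro rfl; rw [mul_zero] at hvy'; exact hy hvy'.symm
      have huv : Submodule.span F {u} ≠ Submodule.span F {v} := by
        intro h
        obtain ⟨c, hc, hcu⟩ := exists_smul_of_span_eq hu h
        apply hxy
        apply span_eq_of_smul hc
        rw [← hux', ← hvy', hcu, mul_smul_comm]
      set L1 : Pts U := ⟨Submodule.span F {x}, x, hxU, hx, rfl⟩
      set L2 : Pts U := ⟨Submodule.span F {y}, y, hyU, hy, rfl⟩
      set Lu : Pts U := ⟨Submodule.span F {u}, u, huU, hu, rfl⟩
      set Lv : Pts U := ⟨Submodule.span F {v}, v, hvU, hv, rfl⟩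
      have hne1 : L1 ≠ L2 := fun h => hxy (congrArg Subtype.val h)
      have hne2 : Lu ≠ Lv := fun h => huv (congrArg Subtype.val h)
      have hmid : x * y⁻¹ = u * v⁻¹ := by
        rw [← hux', ← hvy']
        field_simp
      have hval : hmap U u0 h0 hu0 (Sum.inl ⟨(L1, L2), hne1⟩)
          = hmap U u0 h0 hu0 (Sum.inl ⟨(Lu, Lv), hne2⟩) := by
        apply Subtype.ext
        show Submodule.span F {gen L1 * (gen L2)⁻¹} = Submodule.span F {gen Lu * (gen Lv)⁻¹}
        calc Submodule.span F {gen L1 * (gen L2)⁻¹}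
            = Submodule.span F {x * y⁻¹} :=
              frac_wd (gen_ne L1) hy (gen_span L1).symm (gen_span L2).symm
          _ = Submodule.span F {u * v⁻¹} := by rw [hmid]
          _ = Submodule.span F {gen Lu * (gen Lv)⁻¹} :=
              frac_wd hu (gen_ne Lv) (gen_span Lu) (gen_span Lv)
      have hpairs := hinj hval
      replace hpairs := Sum.inl_injective hpairs
      have hsp : Submodule.span F {x} = Submodule.span F {u} :=
        congrArg (fun p : DPairs U => p.1.1.1) hpairs
      obtain ⟨c, hc, hcx⟩ := exists_smul_of_span_eq hx hsp
      have : α = algebraMap F K c := by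
        rw [← hux', Algebra.smul_def] at hcx
        exact mul_right_cancel₀ hu hcx
      rw [this] at hne
      exact hne (map_algebraMap_eq U hc)
  · -- optimality implies equality
    rintro ⟨hstab, hdim⟩
    have hinj := hmap_inj u0 h0 hu0 hstab hdim
    have := Nat.card_eq_of_bijective _ ⟨hinj, hsurj⟩
    rw [← this, hdom, hQ]
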